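/- Let S be a finite-valued random vector in ℤ_{≥0}^K with D = ∑_k S_k. Fix d ≥ 1 with P(D=d) > 0 and P(D=d-1) > 0, and fix a coordinate k. If E[S_k | D=d] < E[S_k | D=d-1], then every weighting function w satisfying the coupling constraints (w ≥ 0, ∑_{s_d} w(s_d, s_{d-1}) = P(S=s_{d-1}|D=d-1), ∑_{s_{d-1}} w(s_d, s_{d-1}) = P(S=s_d|D=d)) must assign strictly positive weight to at least one incongruent pair (s_d, s_{d-1}), i.e., a pair for which s_d ≠ s_{d-1} + e_j for every coordinate j. -/

import Mathlib

open Finset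

/- Probability of an event, conditional probability `P(A|B)`, and conditional
expectation `E[Y|A]` under a mass function `p` on a finite sample space. -/

open Classical in
noncomputable def Pr {Ω : Type*} [Fintype Ω] (p : Ω → ℝ) (A : Ω → Prop) : ℝ :=
  ∑ ω, if A ω then p ω else 0

noncomputable def cPr {Ω : Type*} [Fintype Ω] (p : Ω → ℝ) (A B : Ω → Prop) : ℝ :=
  Pr p (fun ω => A ω ∧ B ω) / Pr p B

open Classical in
noncomputable def cexp {Ω : Type*} [Fintype Ω] (p : Ω → ℝ) (Y : Ω → ℝ) (A : Ω → Prop) : ℝ :=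
  (∑ ω, if A ω then p ω * Y ω else 0) / Pr p A

lemma key_sum {Ω : Type*} [Fintype Ω] {K : ℕ}
    (p : Ω → ℝ) (S : Ω → Fin K → ℕ) (D : Ω → ℕ) (hD : ∀ ω, D ω = ∑ i, S ω i)
    (d : ℕ) (f : (Fin K → ℕ) → ℝ) :
    ∑ s ∈ (univ.image S).filter (fun s => ∑ i, s i = d),
        f s * Pr p (fun ω => S ω = s ∧ D ω = d)
      = ∑ ω, @ite _ (D ω = d) (Classical.propDecidable _) (p ω * f (S ω)) 0 := by
  classical
  unfold Pr
  simp_rw [Finset.mul_sum]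
  rw [Finset.sum_comm]
  refine Finset.sum_congr rfl fun ω _ => ?_
  have hmem : S ω ∈ (univ.image S).filter (fun s => ∑ i, s i = d) ↔ D ω = d := by
    simp [Finset.mem_filter, Finset.mem_image, ← hD]
  by_cases h : D ω = d
  · rw [Finset.sum_eq_single (S ω)]
    · rw [if_pos ⟨rfl, h⟩, if_pos h]; ring
    · intro b _ hb
      rw [if_neg (fun hc => hb hc.1.symm), mul_zero]
    · intro hns; exact absurd (hmem.mpr h) hns
  · rw [if_neg h]
    apply Finset.sum_eq_zero
    intro b _
    rw [if_neg (fun hc => h hc.2), mul_zero]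

/-- Decreasing sub-treatment means imply incongruency: if `E[S_k|D=d] < E[S_k|D=d-1]`,
then every nonnegative weighting function satisfying the coupling constraints with
respect to the conditional distributions of `S` given `D=d` and `D=d-1` must put
strictly positive weight on some incongruent pair `(s_d, s_{d-1})`. -/
theorem decreasing_mean_implies_incongruency
    {Ω : Type*} [Fintype Ω] (K : ℕ)
    (p : Ω → ℝ) (hp0 : ∀ ω, 0 ≤ p ω) (hp1 : ∑ ω, p ω = 1)
    (S : Ω → Fin K → ℕ) (D : Ω → ℕ) (hD : ∀ ω, D ω = ∑ i, S ω i)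
    (d : ℕ) (hd : 1 ≤ d)
    (hPd : 0 < Pr p (fun ω => D ω = d)) (hPd1 : 0 < Pr p (fun ω => D ω = d - 1))
    (k : Fin K)
    (hdec : cexp p (fun ω => (S ω k : ℝ)) (fun ω => D ω = d)
          < cexp p (fun ω => (S ω k : ℝ)) (fun ω => D ω = d - 1))
    (w : (Fin K → ℕ) → (Fin K → ℕ) → ℝ)
    (hw0 : ∀ s s', 0 ≤ w s s')
    (hw1 : ∀ s' : Fin K → ℕ, (∑ i, s' i = d - 1) →
      ∑ s ∈ (univ.image S).filter (fun s => ∑ i, s i = d), w s s'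
        = cPr p (fun ω => S ω = s') (fun ω => D ω = d - 1))
    (hw2 : ∀ s : Fin K → ℕ, (∑ i, s i = d) →
      ∑ s' ∈ (univ.image S).filter (fun s' => ∑ i, s' i = d - 1), w s s'
        = cPr p (fun ω => S ω = s) (fun ω => D ω = d)) :
    ∃ s s' : Fin K → ℕ, (∑ i, s i = d) ∧ (∑ i, s' i = d - 1) ∧
      (∀ j : Fin K, s ≠ s' + Pi.single j 1) ∧ 0 < w s s' := by
  classical
  by_contra hcon
  push_neg at hcon
  set Fd := (univ.image S).filter (fun s => ∑ i, s i = d) with hFd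
  set Fd1 := (univ.image S).filter (fun s => ∑ i, s i = d - 1) with hFd1
  -- express conditional expectations as sums over values
  have hEd : cexp p (fun ω => (S ω k : ℝ)) (fun ω => D ω = d)
      = ∑ s ∈ Fd, (s k : ℝ) * cPr p (fun ω => S ω = s) (fun ω => D ω = d) := by
    unfold cexp cPr
    beta_reduce
    rw [← key_sum p S D hD d (fun s => (s k : ℝ)), Finset.sum_div]
    simp_rw [mul_div_assoc]
    rfl
  have hEd1 : cexp p (fun ω => (S ω k : ℝ)) (fun ω => D ω = d - 1)
      = ∑ s ∈ Fd1, (s k : ℝ) * cPr p (fun ω => S ω = s) (fun ω => D ω = d - 1) := by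
    unfold cexp cPr
    beta_reduce
    rw [← key_sum p S D hD (d - 1) (fun s => (s k : ℝ)), Finset.sum_div]
    simp_rw [mul_div_assoc]
    rfl
  -- rewrite via coupling
  have h1 : cexp p (fun ω => (S ω k : ℝ)) (fun ω => D ω = d)
      = ∑ s ∈ Fd, ∑ s' ∈ Fd1, (s k : ℝ) * w s s' := by
    rw [hEd]
    refine Finset.sum_congr rfl fun s hs => ?_
    rw [← hw2 s (Finset.mem_filter.mp hs).2, Finset.mul_sum]
  have h2 : cexp p (fun ω => (S ω k : ℝ)) (fun ω => D ω = d - 1)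
      = ∑ s ∈ Fd, ∑ s' ∈ Fd1, (s' k : ℝ) * w s s' := by
    rw [hEd1, Finset.sum_comm]
    refine Finset.sum_congr rfl fun s' hs' => ?_
    rw [← hw1 s' (Finset.mem_filter.mp hs').2, Finset.mul_sum]
  have hle : ∑ s ∈ Fd, ∑ s' ∈ Fd1, (s' k : ℝ) * w s s'
      ≤ ∑ s ∈ Fd, ∑ s' ∈ Fd1, (s k : ℝ) * w s s' := by
    refine Finset.sum_le_sum fun s hs => Finset.sum_le_sum fun s' hs' => ?_
    rcases lt_or_eq_of_le (hw0 s s') with hpos | heq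
    · have hne := hcon s s' (Finset.mem_filter.mp hs).2 (Finset.mem_filter.mp hs').2
      have : ¬ ∀ j : Fin K, s ≠ s' + Pi.single j 1 := fun hall => absurd hpos (by
        simpa using hne hall)
      push_neg at this
      obtain ⟨j, hj⟩ := this
      have hks : s' k ≤ s k := by
        rw [hj]
        simp only [Pi.add_apply]
        exact Nat.le_add_right _ _
      exact mul_le_mul_of_nonneg_right (by exact_mod_cast hks) (le_of_lt hpos)
    · rw [← heq, mul_zero, mul_zero]
  rw [h1, h2] at hdec
  linarith
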